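/- Let a, b ∈ ℂ with |a|² − |b|² = 1 and let U := [[a, conj(b)], [b, conj(a)]] (an indefinite-unitary matrix preserving the Hermitian form diag(1,−1)), and let θ ∈ ℝ. Then the (2,1) entry of the first Reichardt iterate U₁ has modulus |b| · |1 − (2 − 2cos θ)(1 + |b|²)|. In particular, if cos θ = (2|b|² + 1)/(2(|b|² + 1)), then U₁ is a diagonal matrix. -/

import Mathlib

set_option maxHeartbeats 1000000

open Complex Matrix

lemma inv2 (a b ca cb : ℂ) (hdet : a * ca - b * cb = 1) :
    (!![a, cb; b, ca])⁻¹ = !![ca, -cb; -b, a] := by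
  apply inv_eq_right_inv
  rw [Matrix.mul_fin_two, Matrix.one_fin_two]
  have e1 : a * ca + cb * -b = 1 := by linear_combination hdet
  have e2 : a * -cb + cb * a = 0 := by ring
  have e3 : b * ca + ca * -b = 0 := by ring
  have e4 : b * -cb + ca * a = 1 := by linear_combination hdet
  rw [e1, e2, e3, e4]

/-- The z-rotation `D(θ) = diag(e^{iθ/2}, e^{-iθ/2})`. -/
noncomputable def Dmat (θ : ℝ) : Matrix (Fin 2) (Fin 2) ℂ :=
  !![Complex.exp (Complex.I * θ / 2), 0; 0, Complex.exp (-(Complex.I * θ / 2))]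

/-- The Reichardt iteration `U₀ = U`, `U_{k+1} = U_k D(θ) U_k⁻¹ D(θ) U_k D(θ)⁻²`. -/
noncomputable def reichardt (θ : ℝ) (U : Matrix (Fin 2) (Fin 2) ℂ) :
    ℕ → Matrix (Fin 2) (Fin 2) ℂ
  | 0 => U
  | k + 1 =>
      reichardt θ U k * Dmat θ * (reichardt θ U k)⁻¹ * Dmat θ * reichardt θ U k *
        (Dmat θ ^ 2)⁻¹

lemma Dsq_inv (θ : ℝ) : (Dmat θ ^ 2)⁻¹ =
    !![Complex.exp (-(θ * Complex.I)), 0; 0, Complex.exp (θ * Complex.I)] := by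
  apply inv_eq_right_inv
  rw [pow_two, Dmat, Matrix.mul_fin_two, Matrix.mul_fin_two, Matrix.one_fin_two]
  norm_num [← Complex.exp_add]
  rw [show Complex.I * θ + -(↑θ * Complex.I) = 0 by ring,
    show -(Complex.I * ↑θ / 2) + -(Complex.I * ↑θ / 2) + ↑θ * Complex.I = 0 by ring,
    Complex.exp_zero]
  exact ⟨rfl, rfl⟩

lemma entry_calc (θ : ℝ) (a b ca cb : ℂ) (ha : a ≠ 0) (haa : a * ca = 1 + b * cb) :
    (!![a, cb; b, ca] * Dmat θ * (!![a, cb; b, ca])⁻¹ * Dmat θ * !![a, cb; b, ca] *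
        (Dmat θ ^ 2)⁻¹) 1 0 =
      b * ((1 + b * cb) * (Complex.exp (θ * Complex.I) + Complex.exp (-(θ * Complex.I)))
        - (1 + 2 * (b * cb))) * Complex.exp (-(θ * Complex.I)) ∧
    (!![a, cb; b, ca] * Dmat θ * (!![a, cb; b, ca])⁻¹ * Dmat θ * !![a, cb; b, ca] *
        (Dmat θ ^ 2)⁻¹) 0 1 =
      cb * ((1 + b * cb) * (Complex.exp (θ * Complex.I) + Complex.exp (-(θ * Complex.I)))
        - (1 + 2 * (b * cb))) * Complex.exp (θ * Complex.I) := by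
  have hdet : a * ca - b * cb = 1 := by linear_combination haa
  have hca : ca = (1 + b * cb) / a := by field_simp; linear_combination haa
  have hg : Complex.exp (-(Complex.I * θ / 2)) = (Complex.exp (Complex.I * θ / 2))⁻¹ :=
    Complex.exp_neg _
  have hEi : Complex.exp (-(θ * Complex.I)) = (Complex.exp (θ * Complex.I))⁻¹ :=
    Complex.exp_neg _
  have hE : Complex.exp (θ * Complex.I) =
      Complex.exp (Complex.I * θ / 2) * Complex.exp (Complex.I * θ / 2) := by
    rw [← Complex.exp_add]; ring_nf
  have hf := Complex.exp_ne_zero (Complex.I * θ / 2)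
  rw [inv2 a b ca cb hdet, Dsq_inv]
  constructor <;>
  · simp only [Dmat, Matrix.mul_apply, Fin.sum_univ_two, Matrix.cons_val', Matrix.cons_val_zero,
      Matrix.cons_val_one, Matrix.head_cons, Matrix.head_fin_const, Matrix.empty_val',
      Matrix.cons_val_fin_one, Matrix.of_apply]
    rw [hca, hg, hEi, hE]
    generalize Complex.exp (Complex.I * ↑θ / 2) = f at hf ⊢
    field_simp
    ring_nf
    try (field_simp; ring)

/-- For the indefinite-unitary matrix `U = [[a, conj b],[b, conj a]]` with
`|a|² − |b|² = 1`, the `(2,1)` entry of the first Reichardt iterate has modulus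
`|b|·|1 − (2 − 2cos θ)(1 + |b|²)|`; in particular, if
`cos θ = (2|b|² + 1)/(2(|b|² + 1))`, then `U₁` is diagonal. -/
theorem reichardt_one_offdiag_abs_indefinite (a b : ℂ)
    (h : ‖a‖ ^ 2 - ‖b‖ ^ 2 = 1) (θ : ℝ) :
    ‖(reichardt θ !![a, starRingEnd ℂ b; b, starRingEnd ℂ a] 1) 1 0‖ =
      ‖b‖ * |1 - (2 - 2 * Real.cos θ) * (1 + ‖b‖ ^ 2)| ∧
    (Real.cos θ = (2 * ‖b‖ ^ 2 + 1) / (2 * (‖b‖ ^ 2 + 1)) →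
      (reichardt θ !![a, starRingEnd ℂ b; b, starRingEnd ℂ a] 1).IsDiag) := by
  set n : ℝ := ‖b‖ ^ 2 with hn
  have ha0 : a ≠ 0 := by
    intro ha
    rw [ha] at h
    simp at h
    nlinarith [sq_nonneg ‖b‖]
  have hbb : b * starRingEnd ℂ b = ((n : ℝ) : ℂ) := by
    rw [Complex.mul_conj, hn, Complex.sq_norm]
  have haa : a * starRingEnd ℂ a = 1 + b * starRingEnd ℂ b := by
    rw [Complex.mul_conj, hbb]
    rw [show Complex.normSq a = 1 + n by rw [← Complex.sq_norm]; linarith]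
    push_cast; ring
  have hR : reichardt θ !![a, starRingEnd ℂ b; b, starRingEnd ℂ a] 1 =
      !![a, starRingEnd ℂ b; b, starRingEnd ℂ a] * Dmat θ *
        (!![a, starRingEnd ℂ b; b, starRingEnd ℂ a])⁻¹ * Dmat θ *
        !![a, starRingEnd ℂ b; b, starRingEnd ℂ a] * (Dmat θ ^ 2)⁻¹ := by
    simp [reichardt]
  obtain ⟨h10, h01⟩ := entry_calc θ a b (starRingEnd ℂ a) (starRingEnd ℂ b) ha0 haa
  have hcos : Complex.exp (↑θ * Complex.I) + Complex.exp (-(↑θ * Complex.I)) =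
      2 * ((Real.cos θ : ℝ) : ℂ) := by
    rw [show -(↑θ * Complex.I) = ((-θ : ℝ) : ℂ) * Complex.I by push_cast; ring]
    rw [Complex.exp_mul_I, Complex.exp_mul_I, Complex.ofReal_neg, Complex.cos_neg,
      Complex.sin_neg, Complex.ofReal_cos]
    ring
  have hK : (1 + b * starRingEnd ℂ b) *
        (Complex.exp (↑θ * Complex.I) + Complex.exp (-(↑θ * Complex.I))) -
        (1 + 2 * (b * starRingEnd ℂ b)) =
      ((2 * (1 + n) * Real.cos θ - (1 + 2 * n) : ℝ) : ℂ) := by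
    rw [hbb, hcos]; push_cast; ring
  constructor
  · rw [hR, h10, hK, norm_mul, norm_mul, Complex.norm_real, Real.norm_eq_abs]
    rw [show ‖Complex.exp (-(↑θ * Complex.I))‖ = 1 by
      rw [Complex.norm_exp]; simp]
    rw [show |2 * (1 + n) * Real.cos θ - (1 + 2 * n)| =
        |1 - (2 - 2 * Real.cos θ) * (1 + n)| by congr 1; ring]
    ring
  · intro hct
    have hn1 : (1 + n) ≠ 0 := by positivity
    have hK0 : 2 * (1 + n) * Real.cos θ - (1 + 2 * n) = 0 := by
      rw [hct]; have : n + 1 ≠ 0 := by positivity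
      field_simp; ring
    have h10z : (reichardt θ !![a, starRingEnd ℂ b; b, starRingEnd ℂ a] 1) 1 0 = 0 := by
      rw [hR, h10, hK, hK0]; simp
    have h01z : (reichardt θ !![a, starRingEnd ℂ b; b, starRingEnd ℂ a] 1) 0 1 = 0 := by
      rw [hR, h01, hK, hK0]; simp
    intro i j hij
    fin_cases i <;> fin_cases j
    · exact absurd rfl hij
    · exact h01z
    · exact h10z
    · exact absurd rfl hij
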